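/- The lemniscatic evaluation ∫_{−√3}^0 dy/√(y³ − 3y) = (4/3)^{1/4} · K(1/√2) holds, where y³ − 3y > 0 for y ∈ (−√3, 0). -/

import Mathlib

open MeasureTheory

noncomputable def lauricellaFD (n : ℕ) (a : ℂ) (b : Fin n → ℂ) (c : ℂ) (x : Fin n → ℂ) : ℂ :=
  (Complex.Gamma c / (Complex.Gamma a * Complex.Gamma (c - a))) *
    ∫ u in (0:ℝ)..1, (u : ℂ) ^ (a - 1) * ((1 : ℂ) - u) ^ (c - a - 1) *
      ∏ k, ((1 : ℂ) - x k * u) ^ (-(b k))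

noncomputable def appellF1 (a b₁ b₂ c x₁ x₂ : ℂ) : ℂ :=
  lauricellaFD 2 a ![b₁, b₂] c ![x₁, x₂]

noncomputable def ellipticK (k : ℝ) : ℝ :=
  ∫ θ in (0:ℝ)..(Real.pi/2), (1 - k ^ 2 * Real.sin θ ^ 2) ^ (-(1:ℝ)/2)

lemma s3_pos : (0:ℝ) < Real.sqrt 3 := Real.sqrt_pos.mpr (by norm_num)

lemma s3_sq : Real.sqrt 3 ^ 2 = 3 := Real.sq_sqrt (by norm_num)

lemma image_eq :
    (fun θ : ℝ => -Real.sqrt 3 * Real.cos θ ^ 2) '' Set.Ioo 0 (Real.pi/2)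
      = Set.Ioo (-Real.sqrt 3) (0:ℝ) := by
  ext y
  constructor
  · rintro ⟨θ, ⟨h0, hπ⟩, rfl⟩
    have hc0 : 0 < Real.cos θ := Real.cos_pos_of_mem_Ioo ⟨by linarith [Real.pi_pos], hπ⟩
    have hs0 : 0 < Real.sin θ := Real.sin_pos_of_pos_of_lt_pi h0 (by linarith [Real.pi_pos])
    have hsc : Real.sin θ ^ 2 + Real.cos θ ^ 2 = 1 := Real.sin_sq_add_cos_sq θ
    have h1 : Real.cos θ ^ 2 < 1 := by nlinarith
    refine ⟨?_, ?_⟩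
    · show -Real.sqrt 3 < -Real.sqrt 3 * Real.cos θ ^ 2
      nlinarith [mul_pos s3_pos (show (0:ℝ) < 1 - Real.cos θ ^ 2 by linarith)]
    · show -Real.sqrt 3 * Real.cos θ ^ 2 < 0
      nlinarith [mul_pos s3_pos (pow_pos hc0 2)]
  · rintro ⟨h1, h2⟩
    have hx0 : 0 < -y / Real.sqrt 3 := by
      apply div_pos (by linarith) s3_pos
    have hx1 : -y / Real.sqrt 3 < 1 := by
      rw [div_lt_one s3_pos]; linarith
    set x := Real.sqrt (-y / Real.sqrt 3) with hxdef
    have hxpos : 0 < x := Real.sqrt_pos.mpr hx0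
    have hxlt : x < 1 := by
      rw [hxdef, show (1:ℝ) = Real.sqrt 1 by simp]
      exact Real.sqrt_lt_sqrt hx0.le hx1
    refine ⟨Real.arccos x, ⟨Real.arccos_pos.mpr hxlt, Real.arccos_lt_pi_div_two.mpr hxpos⟩, ?_⟩
    show -Real.sqrt 3 * Real.cos (Real.arccos x) ^ 2 = y
    rw [Real.cos_arccos (by linarith) hxlt.le, hxdef, Real.sq_sqrt hx0.le]
    field_simp

lemma const_eq :
    ((4:ℝ)/3) ^ ((1:ℝ)/4)
      = 2 * Real.sqrt 3 / (Real.sqrt 2 * Real.sqrt (3 * Real.sqrt 3)) := by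
  set B := 2 * Real.sqrt 3 / (Real.sqrt 2 * Real.sqrt (3 * Real.sqrt 3)) with hB
  have h2 : Real.sqrt 2 ^ 2 = 2 := Real.sq_sqrt (by norm_num)
  have h33 : Real.sqrt (3 * Real.sqrt 3) ^ 2 = 3 * Real.sqrt 3 :=
    Real.sq_sqrt (by positivity)
  have hBpos : 0 < B := by
    rw [hB]
    positivity
  have h4 : B ^ (4:ℕ) = 4/3 := by
    rw [hB, div_pow, mul_pow, mul_pow]
    have e1 : Real.sqrt 3 ^ 4 = 9 := by nlinarith [s3_sq]
    have e2 : Real.sqrt 2 ^ 4 = 4 := by nlinarith [h2]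
    have e3 : Real.sqrt (3 * Real.sqrt 3) ^ 4 = 27 := by nlinarith [h33, s3_sq]
    rw [e1, e2, e3]
    norm_num
  rw [← h4, ← Real.rpow_natCast B 4, ← Real.rpow_mul hBpos.le]
  norm_num

theorem lemniscatic_eval :
    (∀ y ∈ Set.Ioo (-Real.sqrt 3) (0:ℝ), 0 < y ^ 3 - 3 * y) ∧
    ∫ y in (-Real.sqrt 3)..(0:ℝ), (Real.sqrt (y ^ 3 - 3 * y))⁻¹ =
      (4/3 : ℝ) ^ ((1:ℝ)/4) * ellipticK (1 / Real.sqrt 2) := by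
  constructor
  · rintro y ⟨h1, h2⟩
    have hy2 : y ^ 2 < 3 := by nlinarith [s3_sq, s3_pos]
    nlinarith
  · have hπ : (0:ℝ) < Real.pi / 2 := by positivity
    -- LHS as a set integral over Ioo
    rw [intervalIntegral.integral_of_le (by linarith [s3_pos]),
      MeasureTheory.integral_Ioc_eq_integral_Ioo, ← image_eq]
    -- change of variables
    rw [MeasureTheory.integral_image_eq_integral_abs_deriv_smul measurableSet_Ioo
      (f' := fun θ => 2 * Real.sqrt 3 * (Real.sin θ * Real.cos θ))
      (fun θ _ => by
        have h := ((Real.hasDerivAt_cos θ).fun_pow 2).const_mul (-Real.sqrt 3)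
        have h2 : HasDerivAt (fun θ : ℝ => -Real.sqrt 3 * Real.cos θ ^ 2)
            (2 * Real.sqrt 3 * (Real.sin θ * Real.cos θ)) θ := by
          exact h.congr_deriv (by ring)
        exact h2.hasDerivWithinAt)
      (by
        rintro θ₁ ⟨a1, b1⟩ θ₂ ⟨a2, b2⟩ h
        have hc1 : 0 ≤ Real.cos θ₁ :=
          Real.cos_nonneg_of_mem_Icc ⟨by linarith [Real.pi_pos], b1.le⟩
        have hc2 : 0 ≤ Real.cos θ₂ :=
          Real.cos_nonneg_of_mem_Icc ⟨by linarith [Real.pi_pos], b2.le⟩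
        have hsq : Real.cos θ₁ ^ 2 = Real.cos θ₂ ^ 2 := by
          have := mul_left_cancel₀ (a := -Real.sqrt 3) (by nlinarith [s3_pos]) h
          exact this
        have hcc : Real.cos θ₁ = Real.cos θ₂ := by
          nlinarith
        exact Real.injOn_cos ⟨a1.le, by linarith [Real.pi_pos]⟩
          ⟨a2.le, by linarith [Real.pi_pos]⟩ hcc)]
    -- RHS as a set integral over Ioo
    rw [ellipticK, intervalIntegral.integral_of_le hπ.le,
      MeasureTheory.integral_Ioc_eq_integral_Ioo, ← MeasureTheory.integral_const_mul]
    apply MeasureTheory.setIntegral_congr_fun measurableSet_Ioo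
    rintro θ ⟨h0, hp⟩
    have hc : 0 < Real.cos θ := Real.cos_pos_of_mem_Ioo ⟨by linarith [Real.pi_pos], hp⟩
    have hs : 0 < Real.sin θ := Real.sin_pos_of_pos_of_lt_pi h0 (by linarith [Real.pi_pos])
    set s := Real.sin θ
    set c := Real.cos θ
    have hsc : s ^ 2 + c ^ 2 = 1 := Real.sin_sq_add_cos_sq θ
    have hA : (-Real.sqrt 3 * c ^ 2) ^ 3 - 3 * (-Real.sqrt 3 * c ^ 2)
        = 3 * Real.sqrt 3 * ((c * s) ^ 2 * (1 + c ^ 2)) := by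
      have h3 : Real.sqrt 3 ^ 2 = 3 := s3_sq
      linear_combination (-(Real.sqrt 3) * c ^ 6) * h3 +
        (-3 * Real.sqrt 3 * c ^ 2 * (1 + c ^ 2)) * hsc
    have hk : ((1:ℝ) / Real.sqrt 2) ^ 2 = 1/2 := by
      rw [div_pow, Real.sq_sqrt (by norm_num : (0:ℝ) ≤ 2)]; norm_num
    have hbase : 1 - (1/Real.sqrt 2) ^ 2 * s ^ 2 = (1 + c ^ 2) / 2 := by
      rw [hk]; linarith
    have h1c : (0:ℝ) < 1 + c ^ 2 := by positivity
    dsimp only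
    rw [hA, hbase, smul_eq_mul]
    rw [Real.sqrt_mul (by positivity) ((c*s)^2 * (1 + c^2)),
      Real.sqrt_mul (by positivity) (1 + c^2), Real.sqrt_sq (by positivity)]
    have hrpow : ((1 + c ^ 2) / 2) ^ (-(1:ℝ)/2)
        = Real.sqrt 2 / Real.sqrt (1 + c ^ 2) := by
      rw [show (-(1:ℝ)/2) = -(1/2) by ring, Real.rpow_neg (by positivity),
        ← Real.sqrt_eq_rpow, Real.sqrt_div (by positivity) 2, inv_div]
    rw [hrpow, const_eq]
    have hx : 0 < Real.sqrt (3 * Real.sqrt 3) := Real.sqrt_pos.mpr (by positivity)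
    have hy : 0 < Real.sqrt (1 + c ^ 2) := Real.sqrt_pos.mpr h1c
    have h2 : (0:ℝ) < Real.sqrt 2 := Real.sqrt_pos.mpr (by norm_num)
    rw [abs_of_pos (by positivity)]
    field_simp
    ring
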